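/- Let $(X_k)_{k\ge 1}$ be a sequence of centered real random variables such that there is a constant $C<\infty$ with: (i) $\mathbb{E} S_n^2 \le C n$ for all $n$, where $S_n=\sum_{k=1}^n X_k$; (ii) for every $n$ and every event $A\in\sigma(X_1,\dots,X_i)$, $|\sum_{k=i+1}^n \mathbb{E}[I_A X_i X_k]| \le C$; and (iii) for every $i<j$, the covariance bound $|\mathbb{E}[I_A S_{i-1} X_j]| \le C\,(\mathbb{E}[S_{i-1}^2 I_A])^{1/2}\rho(j-i)$ holds with $\sum_{j\ge 1}\rho(j)<\infty$. Then there exists $C'<\infty$ such that for all $\lambda>0$ and $n\ge 1$, $\mathbb{P}\left(\max_{1\le i\le n}|S_i|\ge\lambda\right) \le \frac{C' n}{\lambda^2} + \frac{C'\sqrt{n}}{\lambda}$. -/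

import Mathlib

open MeasureTheory

private lemma aux_int_mul {Ω : Type*} [MeasurableSpace Ω] {μ : Measure Ω} {f g : Ω → ℝ}
    (hf : Measurable f) (hg : Measurable g)
    (hf2 : Integrable (fun ω => f ω ^ 2) μ) (hg2 : Integrable (fun ω => g ω ^ 2) μ) :
    Integrable (fun ω => f ω * g ω) μ := by
  refine ((hf2.add hg2).div_const 2).mono ((hf.mul hg).aestronglyMeasurable)
    (Filter.Eventually.of_forall fun ω => ?_)
  simp only [Real.norm_eq_abs, Pi.add_apply]
  rw [abs_of_nonneg (by positivity : (0:ℝ) ≤ (f ω ^ 2 + g ω ^ 2) / 2), abs_mul]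
  nlinarith [sq_nonneg (|f ω| - |g ω|), sq_abs (f ω), sq_abs (g ω), abs_nonneg (f ω),
    abs_nonneg (g ω)]

private lemma aux_int_sq_sub {Ω : Type*} [MeasurableSpace Ω] {μ : Measure Ω} {f g : Ω → ℝ}
    (hf : Measurable f) (hg : Measurable g)
    (hf2 : Integrable (fun ω => f ω ^ 2) μ) (hg2 : Integrable (fun ω => g ω ^ 2) μ) :
    Integrable (fun ω => (f ω - g ω) ^ 2) μ := by
  have h := (hf2.sub ((aux_int_mul hf hg hf2 hg2).const_mul 2)).add hg2
  exact h.congr (Filter.Eventually.of_forall fun ω => by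
    simp only [Pi.add_apply, Pi.sub_apply]; ring)

/-- A Kolmogorov-type maximal inequality for weakly dependent centered sequences
(Davydov's Lemma 2.2; second statement of Corollary 3.4 of the paper). -/
theorem maximal_inequality_weak_dependence
    {Ω : Type*} [MeasurableSpace Ω] (μ : Measure Ω) [IsProbabilityMeasure μ]
    (X : ℕ → Ω → ℝ) (S : ℕ → Ω → ℝ) (ρ : ℕ → ℝ) (C : ℝ)
    (hS : ∀ n ω, S n ω = ∑ k ∈ Finset.Icc 1 n, X k ω)
    (hmeas : ∀ k, Measurable (X k))
    (hint : ∀ n, Integrable (fun ω => (S n ω) ^ 2) μ)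
    (hcent : ∀ k, ∫ ω, X k ω ∂μ = 0)
    (hρ0 : ∀ j, 0 ≤ ρ j) (hρsum : Summable ρ)
    (hvar : ∀ n : ℕ, ∫ ω, (S n ω) ^ 2 ∂μ ≤ C * n)
    (hii : ∀ n i : ℕ, ∀ A : Set Ω,
      MeasurableSet[⨆ k ∈ Set.Icc 1 i, MeasurableSpace.comap (X k) inferInstance] A →
      |∑ k ∈ Finset.Icc (i + 1) n, ∫ ω in A, X i ω * X k ω ∂μ| ≤ C)
    (hiii : ∀ i j : ℕ, i < j → ∀ A : Set Ω,
      MeasurableSet[⨆ k ∈ Set.Icc 1 i, MeasurableSpace.comap (X k) inferInstance] A →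
      |∫ ω in A, S (i - 1) ω * X j ω ∂μ| ≤
        C * (∫ ω in A, (S (i - 1) ω) ^ 2 ∂μ) ^ ((1 : ℝ) / 2) * ρ (j - i)) :
    ∃ C' : ℝ, ∀ lam : ℝ, 0 < lam → ∀ n : ℕ, 1 ≤ n →
      (μ {ω | ∃ i ∈ Finset.Icc 1 n, lam ≤ |S i ω|}).toReal ≤
        C' * n / lam ^ 2 + C' * Real.sqrt n / lam := by
  classical
  set m : ℕ → MeasurableSpace Ω :=
    fun i => ⨆ k ∈ Set.Icc 1 i, MeasurableSpace.comap (X k) inferInstance with hm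
  have hmle : ∀ i, m i ≤ ‹MeasurableSpace Ω› := fun i =>
    iSup₂_le fun k _ => (hmeas k).comap_le
  -- S k is measurable w.r.t. m i for k ≤ i
  have hSm : ∀ i k, k ≤ i → Measurable[m i] (S k) := by
    intro i k hk
    have hfe : S k = fun ω => ∑ j ∈ Finset.Icc 1 k, X j ω := funext fun ω => hS k ω
    rw [hfe]
    refine Finset.measurable_sum _ fun j hj => ?_
    have hj1 := Finset.mem_Icc.1 hj
    have hj' : j ∈ Set.Icc 1 i := ⟨hj1.1, le_trans hj1.2 hk⟩
    exact Measurable.of_comap_le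
      (le_iSup₂ (f := fun k _ => MeasurableSpace.comap (X k) inferInstance) j hj')
  have hSmeas : ∀ k, Measurable (S k) := fun k =>
    (hSm k k le_rfl).mono (hmle k) le_rfl
  -- pointwise sum facts
  have hIoc : ∀ m' : ℕ, ∀ ω, S m' ω = ∑ k ∈ Finset.Ioc 0 m', X k ω := by
    intro m' ω; rw [hS, ← Finset.Icc_add_one_left_eq_Ioc]; rfl
  have hsplit : ∀ i n' : ℕ, i ≤ n' → ∀ ω,
      S n' ω = S i ω + ∑ k ∈ Finset.Ioc i n', X k ω := by
    intro i n' hin ω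
    rw [hIoc, hIoc, ← Finset.sum_Ioc_consecutive _ (Nat.zero_le i) hin]
  have hstep : ∀ i : ℕ, 1 ≤ i → ∀ ω, S i ω = S (i - 1) ω + X i ω := by
    intro i hi ω
    obtain ⟨j, rfl⟩ : ∃ j, i = j + 1 := ⟨i - 1, (Nat.succ_pred_eq_of_pos hi).symm⟩
    simp only [Nat.add_sub_cancel]
    rw [hIoc, hIoc, Finset.sum_Ioc_succ_top (Nat.zero_le j)]
  have hS0 : ∀ ω, S 0 ω = 0 := fun ω => by rw [hS]; simp
  have hXsq : ∀ k, 1 ≤ k → Integrable (fun ω => X k ω ^ 2) μ := by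
    intro k hk
    refine (aux_int_sq_sub (hSmeas k) (hSmeas (k - 1)) (hint k) (hint (k - 1))).congr
      (Filter.Eventually.of_forall fun ω => ?_)
    show (S k ω - S (k - 1) ω) ^ 2 = X k ω ^ 2
    rw [hstep k hk ω]; ring
  have hC0 : 0 ≤ C := by
    have h1 := hvar 1
    have h2 : 0 ≤ ∫ ω, S 1 ω ^ 2 ∂μ := integral_nonneg fun ω => sq_nonneg _
    have := h2.trans h1
    simpa using this
  set R := ∑' j, ρ j with hR
  have hR0 : 0 ≤ R := tsum_nonneg hρ0
  refine ⟨3 * C + 2 * C * R, ?_⟩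
  intro lam hlam n hn
  -- first passage decomposition
  set A : ℕ → Set Ω := fun i =>
    {ω | (∀ k ∈ Finset.range i, |S k ω| < lam) ∧ lam ≤ |S i ω|} with hAdef
  have hAm : ∀ i, MeasurableSet[m i] (A i) := by
    intro i
    letI : MeasurableSpace Ω := m i
    have hset : A i = (⋂ k ∈ Finset.range i, {ω | |S k ω| < lam}) ∩ {ω | lam ≤ |S i ω|} := by
      ext ω; simp [hAdef, Set.mem_iInter]
    rw [hset]
    refine MeasurableSet.inter ?_ ?_
    · refine Finset.measurableSet_biInter _ fun k hk => ?_
      exact measurableSet_lt ((hSm i k (Finset.mem_range.1 hk).le).abs) measurable_const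
    · exact measurableSet_le measurable_const ((hSm i i le_rfl).abs)
  have hAmeas : ∀ i, MeasurableSet (A i) := fun i => hmle i _ (hAm i)
  have hdisj : ∀ ⦃i j : ℕ⦄, i ≠ j → Disjoint (A i) (A j) := by
    have key : ∀ i j, i < j → Disjoint (A i) (A j) := by
      intro i j hij
      refine Set.disjoint_left.2 fun ω h1 h2 => ?_
      exact absurd h1.2 (not_le.2 (h2.1 i (Finset.mem_range.2 hij)))
    intro i j hij
    rcases lt_or_gt_of_ne hij with h | h
    · exact key _ _ h
    · exact (key _ _ h).symm
  have hUnion : {ω | ∃ i ∈ Finset.Icc 1 n, lam ≤ |S i ω|} = ⋃ i ∈ Finset.Icc 1 n, A i := by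
    ext ω
    simp only [Set.mem_setOf_eq, Set.mem_iUnion, exists_prop]
    constructor
    · rintro ⟨i, hi, hli⟩
      have hex : ∃ j, lam ≤ |S j ω| := ⟨i, hli⟩
      have hfind := Nat.find_spec hex
      have hle : Nat.find hex ≤ i := Nat.find_min' hex hli
      have hne : Nat.find hex ≠ 0 := by
        intro h0
        rw [h0] at hfind
        rw [hS0 ω] at hfind
        simp only [abs_zero] at hfind
        linarith
      refine ⟨Nat.find hex, Finset.mem_Icc.2 ⟨Nat.one_le_iff_ne_zero.2 hne,
        hle.trans (Finset.mem_Icc.1 hi).2⟩, ?_, hfind⟩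
      intro k hk
      exact not_le.1 (Nat.find_min hex (Finset.mem_range.1 hk))
    · rintro ⟨i, hi, hmem⟩
      exact ⟨i, hi, hmem.2⟩
  have hmeasU : μ {ω | ∃ i ∈ Finset.Icc 1 n, lam ≤ |S i ω|}
      = ∑ i ∈ Finset.Icc 1 n, μ (A i) := by
    rw [hUnion]
    exact measure_biUnion_finset (fun i _ j _ hij => hdisj hij) fun i _ => hAmeas i
  have hMsum : (μ {ω | ∃ i ∈ Finset.Icc 1 n, lam ≤ |S i ω|}).toReal
      = ∑ i ∈ Finset.Icc 1 n, (μ (A i)).toReal := by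
    rw [hmeasU, ENNReal.toReal_sum fun i _ => measure_ne_top μ _]
  have hPsum1 : ∑ i ∈ Finset.Icc 1 n, (μ (A i)).toReal ≤ 1 := by
    rw [← hMsum]
    exact ENNReal.toReal_le_of_le_ofReal zero_le_one (by simpa using prob_le_one)
  -- the key per-index estimate
  have hkey : ∀ i ∈ Finset.Icc 1 n, lam ^ 2 * (μ (A i)).toReal ≤
      (∫ ω in A i, S n ω ^ 2 ∂μ) + 2 * C
        + 2 * C * R * lam * Real.sqrt ((μ (A i)).toReal) := by
    intro i hiI
    obtain ⟨hi1, hin⟩ := Finset.mem_Icc.1 hiI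
    set D : Ω → ℝ := fun ω => ∑ k ∈ Finset.Ioc i n, X k ω with hDdef
    have hD : ∀ ω, S n ω = S i ω + D ω := hsplit i n hin
    have hDmeas : Measurable D := Finset.measurable_sum _ fun k _ => hmeas k
    have hDsq : Integrable (fun ω => D ω ^ 2) μ := by
      refine (aux_int_sq_sub (hSmeas n) (hSmeas i) (hint n) (hint i)).congr
        (Filter.Eventually.of_forall fun ω => ?_)
      show (S n ω - S i ω) ^ 2 = D ω ^ 2
      rw [hD ω]; ring
    have int_SiD : Integrable (fun ω => S i ω * D ω) μ :=
      aux_int_mul (hSmeas i) hDmeas (hint i) hDsq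
    have int_Si1D : Integrable (fun ω => S (i - 1) ω * D ω) μ :=
      aux_int_mul (hSmeas (i - 1)) hDmeas (hint (i - 1)) hDsq
    have int_XiD : Integrable (fun ω => X i ω * D ω) μ :=
      aux_int_mul (hmeas i) hDmeas (hXsq i hi1) hDsq
    have int_XiXk : ∀ k ∈ Finset.Ioc i n, Integrable (fun ω => X i ω * X k ω) μ := by
      intro k hk
      have hk1 : 1 ≤ k := le_trans hi1 (Finset.mem_Ioc.1 hk).1.le
      exact aux_int_mul (hmeas i) (hmeas k) (hXsq i hi1) (hXsq k hk1)
    have int_Si1Xk : ∀ k ∈ Finset.Ioc i n, Integrable (fun ω => S (i - 1) ω * X k ω) μ := by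
      intro k hk
      have hk1 : 1 ≤ k := le_trans hi1 (Finset.mem_Ioc.1 hk).1.le
      exact aux_int_mul (hSmeas (i - 1)) (hmeas k) (hint (i - 1)) (hXsq k hk1)
    -- Step A
    have hstepA : lam ^ 2 * (μ (A i)).toReal ≤ ∫ ω in A i, S i ω ^ 2 ∂μ := by
      rw [mul_comm, ← smul_eq_mul, ← measureReal_def]
      refine setIntegral_ge_of_const_le (hAmeas i) (measure_ne_top μ _)
        (fun ω hω => ?_) ((hint i).integrableOn)
      have h2 := hω.2
      nlinarith [sq_abs (S i ω), abs_nonneg (S i ω)]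
    -- Step B
    set Ti := ∫ ω in A i, S i ω * D ω ∂μ with hTidef
    have int_rhs : Integrable (fun ω => S n ω ^ 2 - 2 * (S i ω * D ω)) μ := by
      have h := (hint n).sub (int_SiD.const_mul 2)
      exact h.congr (Filter.Eventually.of_forall fun ω => by simp [Pi.sub_apply])
    have hstepB : ∫ ω in A i, S i ω ^ 2 ∂μ ≤ ∫ ω in A i, S n ω ^ 2 ∂μ + 2 * |Ti| := by
      have h1 : ∫ ω in A i, S i ω ^ 2 ∂μ
          ≤ ∫ ω in A i, (S n ω ^ 2 - 2 * (S i ω * D ω)) ∂μ := by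
        refine setIntegral_mono_on ((hint i).integrableOn) (int_rhs.integrableOn)
          (hAmeas i) (fun ω _ => ?_)
        rw [hD ω]
        nlinarith [sq_nonneg (D ω)]
      have h2 : ∫ ω in A i, (S n ω ^ 2 - 2 * (S i ω * D ω)) ∂μ
          = (∫ ω in A i, S n ω ^ 2 ∂μ) - 2 * Ti := by
        rw [integral_sub ((hint n).integrableOn) ((int_SiD.const_mul 2).integrableOn),
          integral_const_mul]
      have h3 : -Ti ≤ |Ti| := neg_le_abs Ti
      linarith
    -- Step C : decompose Ti
    have hTi : Ti = (∑ k ∈ Finset.Ioc i n, ∫ ω in A i, X i ω * X k ω ∂μ)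
        + ∑ k ∈ Finset.Ioc i n, ∫ ω in A i, S (i - 1) ω * X k ω ∂μ := by
      have h1 : Ti = ∫ ω in A i, (X i ω * D ω + S (i - 1) ω * D ω) ∂μ := by
        refine integral_congr_ae (Filter.Eventually.of_forall fun ω => ?_)
        show S i ω * D ω = X i ω * D ω + S (i - 1) ω * D ω
        rw [hstep i hi1 ω]; ring
      rw [h1, integral_add (int_XiD.integrableOn) (int_Si1D.integrableOn)]
      congr 1
      · have h2 : ∫ ω in A i, X i ω * D ω ∂μ
            = ∫ ω in A i, (∑ k ∈ Finset.Ioc i n, X i ω * X k ω) ∂μ := by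
          refine integral_congr_ae (Filter.Eventually.of_forall fun ω => ?_)
          simp [hDdef, Finset.mul_sum]
        rw [h2, integral_finset_sum _ fun k hk => (int_XiXk k hk).integrableOn]
      · have h2 : ∫ ω in A i, S (i - 1) ω * D ω ∂μ
            = ∫ ω in A i, (∑ k ∈ Finset.Ioc i n, S (i - 1) ω * X k ω) ∂μ := by
          refine integral_congr_ae (Filter.Eventually.of_forall fun ω => ?_)
          simp [hDdef, Finset.mul_sum]
        rw [h2, integral_finset_sum _ fun k hk => (int_Si1Xk k hk).integrableOn]
    -- bound on the X_i part
    have hU : |∑ k ∈ Finset.Ioc i n, ∫ ω in A i, X i ω * X k ω ∂μ| ≤ C := by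
      have h := hii n i (A i) (hAm i)
      rwa [Finset.Icc_add_one_left_eq_Ioc] at h
    -- bound on the S_{i-1} part
    have hQ0 : 0 ≤ ∫ ω in A i, S (i - 1) ω ^ 2 ∂μ :=
      setIntegral_nonneg (hAmeas i) fun ω _ => sq_nonneg _
    have hQle : ∫ ω in A i, S (i - 1) ω ^ 2 ∂μ ≤ lam ^ 2 * (μ (A i)).toReal := by
      have hptw : ∀ ω ∈ A i, S (i - 1) ω ^ 2 ≤ lam ^ 2 := by
        intro ω hω
        have hlt : |S (i - 1) ω| < lam := hω.1 (i - 1) (Finset.mem_range.2 (by omega))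
        nlinarith [sq_abs (S (i - 1) ω), abs_nonneg (S (i - 1) ω)]
      have h := setIntegral_mono_on ((hint (i - 1)).integrableOn)
        (integrableOn_const (measure_ne_top μ _)) (hAmeas i) hptw
      rw [setIntegral_const, smul_eq_mul, measureReal_def] at h
      linarith [mul_comm ((μ (A i)).toReal) (lam ^ 2)]
    have hQhalf : (∫ ω in A i, S (i - 1) ω ^ 2 ∂μ) ^ ((1 : ℝ) / 2)
        ≤ lam * Real.sqrt ((μ (A i)).toReal) := by
      rw [← Real.sqrt_eq_rpow]
      have h := Real.sqrt_le_sqrt hQle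
      rwa [Real.sqrt_mul (sq_nonneg lam), Real.sqrt_sq hlam.le] at h
    have hρbound : ∑ k ∈ Finset.Ioc i n, ρ (k - i) ≤ R := by
      have h2 : Finset.Icc (i + 1) n = (Finset.Icc 1 (n - i)).map (addLeftEmbedding i) := by
        rw [Finset.map_add_left_Icc]
        congr 1
        omega
      have h1 : ∑ k ∈ Finset.Ioc i n, ρ (k - i) = ∑ j ∈ Finset.Icc 1 (n - i), ρ j := by
        rw [← Finset.Icc_add_one_left_eq_Ioc, h2, Finset.sum_map]
        refine Finset.sum_congr rfl fun j hj => ?_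
        congr 1
        simp [addLeftEmbedding]
      rw [h1]
      exact Summable.sum_le_tsum _ (fun j _ => hρ0 j) hρsum
    have hV : |∑ k ∈ Finset.Ioc i n, ∫ ω in A i, S (i - 1) ω * X k ω ∂μ|
        ≤ C * (lam * Real.sqrt ((μ (A i)).toReal)) * R := by
      have hQh0 : 0 ≤ (∫ ω in A i, S (i - 1) ω ^ 2 ∂μ) ^ ((1 : ℝ) / 2) :=
        Real.rpow_nonneg hQ0 _
      calc |∑ k ∈ Finset.Ioc i n, ∫ ω in A i, S (i - 1) ω * X k ω ∂μ|
          ≤ ∑ k ∈ Finset.Ioc i n, |∫ ω in A i, S (i - 1) ω * X k ω ∂μ| :=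
            Finset.abs_sum_le_sum_abs _ _
        _ ≤ ∑ k ∈ Finset.Ioc i n,
            C * (∫ ω in A i, S (i - 1) ω ^ 2 ∂μ) ^ ((1 : ℝ) / 2) * ρ (k - i) :=
            Finset.sum_le_sum fun k hk => hiii i k (Finset.mem_Ioc.1 hk).1 (A i) (hAm i)
        _ = C * (∫ ω in A i, S (i - 1) ω ^ 2 ∂μ) ^ ((1 : ℝ) / 2)
            * ∑ k ∈ Finset.Ioc i n, ρ (k - i) := by rw [Finset.mul_sum]
        _ ≤ C * (lam * Real.sqrt ((μ (A i)).toReal)) * R := by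
            have hsum0 : 0 ≤ ∑ k ∈ Finset.Ioc i n, ρ (k - i) :=
              Finset.sum_nonneg fun k _ => hρ0 _
            have hCQ : C * (∫ ω in A i, S (i - 1) ω ^ 2 ∂μ) ^ ((1 : ℝ) / 2)
                ≤ C * (lam * Real.sqrt ((μ (A i)).toReal)) :=
              mul_le_mul_of_nonneg_left hQhalf hC0
            have h1 : 0 ≤ C * (∫ ω in A i, S (i - 1) ω ^ 2 ∂μ) ^ ((1 : ℝ) / 2) :=
              mul_nonneg hC0 hQh0
            have h2 : 0 ≤ C * (lam * Real.sqrt ((μ (A i)).toReal)) := h1.trans hCQ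
            exact mul_le_mul hCQ hρbound hsum0 h2
    have habs : |Ti| ≤ C + C * (lam * Real.sqrt ((μ (A i)).toReal)) * R := by
      rw [hTi]
      exact (abs_add_le _ _).trans (add_le_add hU hV)
    have hfin := hstepA.trans hstepB
    have : 2 * |Ti| ≤ 2 * C + 2 * C * R * lam * Real.sqrt ((μ (A i)).toReal) := by
      nlinarith [habs]
    linarith
  -- summing up
  have hsum1 : ∑ i ∈ Finset.Icc 1 n, ∫ ω in A i, S n ω ^ 2 ∂μ ≤ C * n := by
    have h1 : ∑ i ∈ Finset.Icc 1 n, ∫ ω in A i, S n ω ^ 2 ∂μ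
        = ∫ ω in ⋃ i ∈ Finset.Icc 1 n, A i, S n ω ^ 2 ∂μ :=
      (integral_biUnion_finset _ (fun i _ => hAmeas i)
        (fun i _ j _ hij => hdisj hij) (fun i _ => (hint n).integrableOn)).symm
    rw [h1]
    exact (setIntegral_le_integral (hint n)
      (Filter.Eventually.of_forall fun ω => sq_nonneg _)).trans (hvar n)
  have hsqrtsum : ∑ i ∈ Finset.Icc 1 n, Real.sqrt ((μ (A i)).toReal) ≤ Real.sqrt n := by
    refine (Real.le_sqrt (Finset.sum_nonneg fun i _ => Real.sqrt_nonneg _)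
      (Nat.cast_nonneg n)).2 ?_
    calc (∑ i ∈ Finset.Icc 1 n, Real.sqrt ((μ (A i)).toReal)) ^ 2
        ≤ (Finset.Icc 1 n).card * ∑ i ∈ Finset.Icc 1 n, Real.sqrt ((μ (A i)).toReal) ^ 2 :=
          sq_sum_le_card_mul_sum_sq
      _ = (n : ℝ) * ∑ i ∈ Finset.Icc 1 n, (μ (A i)).toReal := by
          simp only [Nat.card_Icc, Nat.add_sub_cancel]
          congr 1
          exact Finset.sum_congr rfl fun i _ => Real.sq_sqrt ENNReal.toReal_nonneg
      _ ≤ (n : ℝ) * 1 := mul_le_mul_of_nonneg_left hPsum1 (Nat.cast_nonneg n)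
      _ = (n : ℝ) := mul_one _
  have hM : lam ^ 2 * ∑ i ∈ Finset.Icc 1 n, (μ (A i)).toReal
      ≤ 3 * C * n + 2 * C * R * lam * Real.sqrt n := by
    calc lam ^ 2 * ∑ i ∈ Finset.Icc 1 n, (μ (A i)).toReal
        = ∑ i ∈ Finset.Icc 1 n, lam ^ 2 * (μ (A i)).toReal := Finset.mul_sum _ _ _
      _ ≤ ∑ i ∈ Finset.Icc 1 n, ((∫ ω in A i, S n ω ^ 2 ∂μ) + 2 * C
            + 2 * C * R * lam * Real.sqrt ((μ (A i)).toReal)) :=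
          Finset.sum_le_sum hkey
      _ = (∑ i ∈ Finset.Icc 1 n, ∫ ω in A i, S n ω ^ 2 ∂μ)
            + (Finset.Icc 1 n).card * (2 * C)
            + 2 * C * R * lam * ∑ i ∈ Finset.Icc 1 n, Real.sqrt ((μ (A i)).toReal) := by
          rw [Finset.sum_add_distrib, Finset.sum_add_distrib, Finset.sum_const,
            ← Finset.mul_sum]
          simp [nsmul_eq_mul]
      _ ≤ C * n + n * (2 * C) + 2 * C * R * lam * Real.sqrt n := by
          have hcard : ((Finset.Icc 1 n).card : ℝ) = n := by rw [Nat.card_Icc]; simp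
          rw [hcard]
          have h3 : 2 * C * R * lam * ∑ i ∈ Finset.Icc 1 n, Real.sqrt ((μ (A i)).toReal)
              ≤ 2 * C * R * lam * Real.sqrt n :=
            mul_le_mul_of_nonneg_left hsqrtsum (by positivity)
          linarith [hsum1]
      _ = 3 * C * n + 2 * C * R * lam * Real.sqrt n := by ring
  rw [hMsum]
  have hlam2 : (0 : ℝ) < lam ^ 2 := by positivity
  have h2 : ∑ i ∈ Finset.Icc 1 n, (μ (A i)).toReal
      ≤ (3 * C * n + 2 * C * R * lam * Real.sqrt n) / lam ^ 2 := by
    rw [le_div_iff₀ hlam2]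
    calc (∑ i ∈ Finset.Icc 1 n, (μ (A i)).toReal) * lam ^ 2
        = lam ^ 2 * ∑ i ∈ Finset.Icc 1 n, (μ (A i)).toReal := mul_comm _ _
      _ ≤ _ := hM
  refine h2.trans ?_
  have he : (3 * C * (n : ℝ) + 2 * C * R * lam * Real.sqrt n) / lam ^ 2
      = 3 * C * n / lam ^ 2 + 2 * C * R * Real.sqrt n / lam := by
    field_simp
  rw [he]
  have hsq0 : (0 : ℝ) ≤ Real.sqrt n := Real.sqrt_nonneg _
  have hn0 : (0 : ℝ) ≤ n := Nat.cast_nonneg n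
  have hle1 : 3 * C * (n : ℝ) / lam ^ 2 ≤ (3 * C + 2 * C * R) * n / lam ^ 2 :=
    (div_le_div_iff_of_pos_right hlam2).2
      (by nlinarith [mul_nonneg (mul_nonneg hC0 hR0) hn0])
  have hle2 : 2 * C * R * Real.sqrt n / lam ≤ (3 * C + 2 * C * R) * Real.sqrt n / lam :=
    (div_le_div_iff_of_pos_right hlam).2
      (by nlinarith [mul_nonneg hC0 hsq0])
  linarith
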